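/- Let X ⊂ ℝⁿ be a regular convex set, f a projectively self-concordant barrier on X with negative curvature, and suppose for all x ∈ int X and h ∈ ℝⁿ the inequality C(x)[h,h,h] ≤ 2·((ω_x(h)² − 1)/ω_x(h))·(G(x)[h,h])^{3/2} holds, where ω_x(h) = (σ_x(h) − f'(x)[h])/√(G(x)[h,h]). Then for fixed x and h, the function t ↦ ω_{x+th}(h) is non-decreasing on the interval where x + th ∈ int X. -/

import Mathlib

open Filter

variable {E : Type*} [NormedAddCommGroup E] [NormedSpace ℝ E]

/-- A regular convex set: closed, convex, with nonempty interior, containing no lines. -/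
def IsRegularConvex (X : Set E) : Prop :=
  IsClosed X ∧ Convex ℝ X ∧ (interior X).Nonempty ∧
    ∀ x d : E, d ≠ 0 → ¬ (∀ t : ℝ, x + t • d ∈ X)

/-- Affine metric `G(x)[h,h] = f''(x)[h,h] - (f'(x)[h])²`. -/
noncomputable def affMetric (f : E → ℝ) (x h : E) : ℝ :=
  iteratedFDeriv ℝ 2 f x (fun _ => h) - (fderiv ℝ f x h)^2

/-- Cubic form `C(x)[h,h,h]`. -/
noncomputable def cubicForm (f : E → ℝ) (x h : E) : ℝ :=
  iteratedFDeriv ℝ 3 f x (fun _ => h)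
    - 6 * iteratedFDeriv ℝ 2 f x (fun _ => h) * fderiv ℝ f x h
    + 4 * (fderiv ℝ f x h)^3

/-- Projectively self-concordant barrier with parameter γ on X. -/
def IsPSCBarrier (X : Set E) (f : E → ℝ) (γ : ℝ) : Prop :=
  ContDiffOn ℝ 3 f (interior X) ∧
  (∀ x ∈ interior X, ∀ h : E, h ≠ 0 → 0 < affMetric f x h) ∧
  (∀ x ∈ frontier X, Tendsto f (nhdsWithin x (interior X)) atTop) ∧
  (∀ x ∈ interior X, ∀ h : E, |cubicForm f x h| ≤ 2 * γ * (affMetric f x h) ^ ((3:ℝ)/2))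

/-- `σ_x(h) = inf { 1/t : t > 0, x + t•h ∈ X }`. -/
noncomputable def sigmaDist (X : Set E) (x h : E) : ℝ :=
  sInf {r : ℝ | ∃ t : ℝ, 0 < t ∧ x + t • h ∈ X ∧ r = 1/t}

/-- `ω_x(h) = (σ_x(h) − f'(x)[h]) / √(G(x)[h,h])`. -/
noncomputable def omegaQ (X : Set E) (f : E → ℝ) (x h : E) : ℝ :=
  (sigmaDist X x h - fderiv ℝ f x h) / Real.sqrt (affMetric f x h)


section AuxSC
open Set

open Filter Set

variable {E : Type*} [NormedAddCommGroup E] [NormedSpace ℝ E]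

lemma line_hasDerivAt (x h : E) (t : ℝ) : HasDerivAt (fun t : ℝ => x + t • h) h t := by
  simpa using ((hasDerivAt_id t).smul_const h).const_add x

lemma aux_g1 {X : Set E} {f : E → ℝ} (hfc : ContDiffOn ℝ 3 f (interior X))
    {x h : E} {t : ℝ} (ht : x + t • h ∈ interior X) :
    HasDerivAt (fun t : ℝ => f (x + t • h)) (fderiv ℝ f (x + t • h) h) t := by
  have hd : DifferentiableAt ℝ f (x + t • h) :=
    (hfc.differentiableOn (by norm_num)).differentiableAt
      (isOpen_interior.mem_nhds ht)
  exact hd.hasFDerivAt.comp_hasDerivAt t (line_hasDerivAt x h t)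

lemma aux_g2 {X : Set E} {f : E → ℝ} (hfc : ContDiffOn ℝ 3 f (interior X))
    {x h : E} {t : ℝ} (ht : x + t • h ∈ interior X) :
    HasDerivAt (fun t : ℝ => fderiv ℝ f (x + t • h) h)
      (iteratedFDeriv ℝ 2 f (x + t • h) (fun _ => h)) t := by
  have hf' : ContDiffOn ℝ 2 (fun z => fderiv ℝ f z) (interior X) :=
    hfc.fderiv_of_isOpen isOpen_interior (by norm_num)
  have hd : DifferentiableAt ℝ (fun z => fderiv ℝ f z) (x + t • h) :=
    (hf'.differentiableOn (by norm_num)).differentiableAt (isOpen_interior.mem_nhds ht)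
  have h1 : HasDerivAt (fun t : ℝ => fderiv ℝ f (x + t • h))
      (fderiv ℝ (fderiv ℝ f) (x + t • h) h) t :=
    hd.hasFDerivAt.comp_hasDerivAt t (line_hasDerivAt x h t)
  have h2 := ((ContinuousLinearMap.apply ℝ ℝ h).hasFDerivAt.comp_hasDerivAt t h1)
  rw [iteratedFDeriv_two_apply f (x + t • h) (fun _ => h)]
  exact h2

lemma aux_g3 {X : Set E} {f : E → ℝ} (hfc : ContDiffOn ℝ 3 f (interior X))
    {x h : E} {t : ℝ} (ht : x + t • h ∈ interior X) :
    HasDerivAt (fun t : ℝ => iteratedFDeriv ℝ 2 f (x + t • h) (fun _ => h))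
      (iteratedFDeriv ℝ 3 f (x + t • h) (fun _ => h)) t := by
  have hd : DifferentiableAt ℝ (iteratedFDeriv ℝ 2 f) (x + t • h) := by
    have := hfc.differentiableOn_iteratedFDerivWithin (m := 2) (by norm_num)
      (isOpen_interior.uniqueDiffOn)
    have h2 : DifferentiableOn ℝ (iteratedFDeriv ℝ 2 f) (interior X) := by
      apply this.congr
      intro z hz
      exact (iteratedFDerivWithin_of_isOpen (𝕜 := ℝ) (f := f) 2 isOpen_interior hz).symm
    exact h2.differentiableAt (isOpen_interior.mem_nhds ht)
  have h1 : HasDerivAt (fun t : ℝ => iteratedFDeriv ℝ 2 f (x + t • h))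
      (fderiv ℝ (iteratedFDeriv ℝ 2 f) (x + t • h) h) t :=
    hd.hasFDerivAt.comp_hasDerivAt t (line_hasDerivAt x h t)
  have h2 := ((ContinuousMultilinearMap.apply ℝ (fun _ : Fin 2 => E) ℝ
      (fun _ => h)).hasFDerivAt.comp_hasDerivAt t h1)
  rw [iteratedFDeriv_succ_apply_left (fun _ => h : Fin 3 → E)]
  exact h2

open Filter Set

variable {E : Type*} [NormedAddCommGroup E] [NormedSpace ℝ E]


section ray

variable {X : Set E} {x h : E}

lemma tset_convex (hXconv : Convex ℝ X) : Convex ℝ {t : ℝ | x + t • h ∈ X} := by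
  intro t₁ h₁ t₂ h₂ a b ha hb hab
  have key : a • (x + t₁ • h) + b • (x + t₂ • h) = (a+b) • x + (a*t₁ + b*t₂) • h := by
    module
  have hm := hXconv h₁ h₂ ha hb hab
  rw [key, hab, one_smul] at hm
  simpa [smul_eq_mul] using hm

lemma tset_closed (hXc : IsClosed X) : IsClosed {t : ℝ | x + t • h ∈ X} :=
  hXc.preimage (by continuity)

lemma sset_open : IsOpen {t : ℝ | x + t • h ∈ interior X} :=
  isOpen_interior.preimage (by continuity)

lemma mem_sset_of_between (hXconv : Convex ℝ X) {t s r : ℝ}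
    (ht : x + t • h ∈ interior X) (hs : x + s • h ∈ X) (htr : t ≤ r) (hrs : r < s) :
    x + r • h ∈ interior X := by
  have hts : t < s := lt_of_le_of_lt htr hrs
  have hst : s - t ≠ 0 := ne_of_gt (by linarith)
  set θ : ℝ := (r - t) / (s - t) with hθ
  have hθ0 : 0 ≤ θ := div_nonneg (by linarith) (by linarith)
  have hθ1 : θ < 1 := (div_lt_one (by linarith)).2 (by linarith)
  have hmul : θ * (s - t) = r - t := div_mul_cancel₀ _ hst
  have hr : r = (1 - θ) * t + θ * s := by nlinarith [hmul]
  have key : x + r • h = (1 - θ) • (x + t • h) + θ • (x + s • h) := by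
    rw [hr]; module
  rw [key]
  exact hXconv.combo_interior_closure_mem_interior ht (subset_closure hs)
    (by linarith) hθ0 (by ring)

lemma sigma_eq_zero_of_unbdd (hXconv : Convex ℝ X)
    (hub : ¬ BddAbove {t : ℝ | x + t • h ∈ X}) {t : ℝ}
    (ht : x + t • h ∈ X) :
    sigmaDist X (x + t • h) h = 0 := by
  have hall : ∀ s : ℝ, 0 < s → x + t • h + s • h ∈ X := by
    intro s hs
    obtain ⟨u, hu, huls⟩ : ∃ u, (x + u • h ∈ X) ∧ t + s < u := by
      by_contra hcon
      push_neg at hcon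
      exact hub ⟨t + s, fun z hz => hcon z hz⟩
    have hmem : x + (t+s) • h ∈ X :=
      (tset_convex hXconv).segment_subset ht hu
        (by rw [segment_eq_Icc (by linarith : t ≤ u)]
            exact ⟨by linarith, by linarith⟩)
    have : x + t • h + s • h = x + (t + s) • h := by module
    rwa [this]
  unfold sigmaDist
  have hset : {r : ℝ | ∃ s : ℝ, 0 < s ∧ x + t • h + s • h ∈ X ∧ r = 1/s} = Ioi 0 := by
    ext r
    constructor
    · rintro ⟨s, hs, -, rfl⟩
      exact one_div_pos.2 hs
    · intro hr
      exact ⟨1/r, one_div_pos.2 hr, hall _ (one_div_pos.2 hr), by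
        simp [one_div_one_div]⟩
  rw [hset]
  exact csInf_Ioi

lemma sigma_eq_of_bdd (hXc : IsClosed X) (hXconv : Convex ℝ X)
    (hb : BddAbove {t : ℝ | x + t • h ∈ X}) {t : ℝ}
    (ht : x + t • h ∈ interior X) :
    t < sSup {t : ℝ | x + t • h ∈ X} ∧
    sigmaDist X (x + t • h) h = 1 / (sSup {t : ℝ | x + t • h ∈ X} - t) := by
  set T := sSup {t : ℝ | x + t • h ∈ X} with hT
  have htX : x + t • h ∈ X := interior_subset ht
  have hne : {t : ℝ | x + t • h ∈ X}.Nonempty := ⟨t, htX⟩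
  have hTmem : x + T • h ∈ X := (tset_closed hXc).csSup_mem hne hb
  have htT : t < T := by
    obtain ⟨a, b, htab, hab⟩ := mem_nhds_iff_exists_Ioo_subset.1
      ((sset_open (X := X) (x := x) (h := h)).mem_nhds ht)
    obtain ⟨r, hr1, hr2⟩ := exists_between htab.2
    have : r ∈ {t : ℝ | x + t • h ∈ X} :=
      interior_subset (s := X) (hab ⟨lt_trans htab.1 hr1, hr2⟩)
    exact lt_of_lt_of_le hr1 (le_csSup hb this)
  refine ⟨htT, ?_⟩
  unfold sigmaDist
  have h1 : (1 : ℝ)/(T - t) ∈ {r : ℝ | ∃ s : ℝ, 0 < s ∧ x + t • h + s • h ∈ X ∧ r = 1/s} := by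
    refine ⟨T - t, by linarith, ?_, rfl⟩
    have : x + t • h + (T - t) • h = x + T • h := by module
    rw [this]; exact hTmem
  have h2 : ∀ r ∈ {r : ℝ | ∃ s : ℝ, 0 < s ∧ x + t • h + s • h ∈ X ∧ r = 1/s},
      (1 : ℝ)/(T - t) ≤ r := by
    rintro r ⟨s, hs, hsX, rfl⟩
    have hsX' : x + (t + s) • h ∈ X := by
      have : x + t • h + s • h = x + (t + s) • h := by module
      rwa [this] at hsX
    have hle : t + s ≤ T := le_csSup hb hsX'
    exact one_div_le_one_div_of_le hs (by linarith)
  exact le_antisymm (csInf_le ⟨1/(T-t), h2⟩ h1) (le_csInf ⟨_, h1⟩ h2)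

lemma frontier_of_bdd (hXc : IsClosed X) (hb : BddAbove {t : ℝ | x + t • h ∈ X})
    (hne : {t : ℝ | x + t • h ∈ X}.Nonempty) :
    x + (sSup {t : ℝ | x + t • h ∈ X}) • h ∈ frontier X := by
  set T := sSup {t : ℝ | x + t • h ∈ X} with hT
  have hTmem : x + T • h ∈ X := (tset_closed hXc).csSup_mem hne hb
  have hnint : x + T • h ∉ interior X := by
    intro hint
    obtain ⟨a, b, htab, hab⟩ := mem_nhds_iff_exists_Ioo_subset.1
      ((sset_open (X := X) (x := x) (h := h)).mem_nhds hint)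
    obtain ⟨r, hr1, hr2⟩ := exists_between htab.2
    have : r ≤ T := le_csSup hb (interior_subset (s := X) (hab ⟨lt_trans htab.1 hr1, hr2⟩))
    linarith
  rw [hXc.frontier_eq]
  exact ⟨hTmem, hnint⟩

end ray

lemma tangent_le {S : Set ℝ} (hSo : IsOpen S) (hSc : Convex ℝ S) {φ φ' ψ : ℝ → ℝ}
    (Hφ : ∀ t ∈ S, HasDerivAt φ (φ' t) t) (Hφ' : ∀ t ∈ S, HasDerivAt φ' (ψ t) t)
    (hψ : ∀ t ∈ S, ψ t ≤ 0) {t s : ℝ} (ht : t ∈ S) (hs : s ∈ S) (hts : t ≤ s) :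
    φ s ≤ φ t + φ' t * (s - t) := by
  rcases eq_or_lt_of_le hts with rfl|hlt
  · simp
  have hanti : AntitoneOn φ' S := by
    apply antitoneOn_of_deriv_nonpos hSc
    · exact fun z hz => (Hφ' z hz).continuousAt.continuousWithinAt
    · intro z hz
      rw [hSo.interior_eq] at hz
      exact (Hφ' z hz).differentiableAt.differentiableWithinAt
    · intro z hz
      rw [hSo.interior_eq] at hz
      rw [(Hφ' z hz).deriv]
      exact hψ z hz
  have hIcc : Icc t s ⊆ S := hSc.ordConnected.out ht hs
  obtain ⟨c, hc, hceq⟩ := exists_hasDerivAt_eq_slope φ φ' hlt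
    (fun z hz => (Hφ z (hIcc hz)).continuousAt.continuousWithinAt)
    (fun z hz => Hφ z (hIcc ⟨hz.1.le, hz.2.le⟩))
  have hle : φ' c ≤ φ' t := hanti ht (hIcc ⟨hc.1.le, hc.2.le⟩) hc.1.le
  rw [hceq] at hle
  have := (div_le_iff₀ (by linarith : (0:ℝ) < s - t)).1 hle
  linarith

section main

variable {X : Set E} {f : E → ℝ} {x h : E}

lemma sset_convex (hXconv : Convex ℝ X) :
    Convex ℝ {s : ℝ | x + s • h ∈ interior X} :=
  tset_convex (X := interior X) hXconv.interior

lemma omega_nonneg (hXc : IsClosed X) (hXconv : Convex ℝ X)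
    (hfc : ContDiffOn ℝ 3 f (interior X))
    (hGpos : ∀ y ∈ interior X, ∀ h : E, h ≠ 0 → 0 < affMetric f y h)
    (hbarrier : ∀ y ∈ frontier X, Tendsto f (nhdsWithin y (interior X)) atTop)
    (hh : h ≠ 0) {t : ℝ} (ht : x + t • h ∈ interior X) :
    fderiv ℝ f (x + t • h) h ≤ sigmaDist X (x + t • h) h := by
  classical
  set S : Set ℝ := {s : ℝ | x + s • h ∈ interior X} with hSdef
  have hSo : IsOpen S := sset_open
  have hSc : Convex ℝ S := sset_convex hXconv
  set g1 : ℝ → ℝ := fun s => fderiv ℝ f (x + s • h) h with hg1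
  set g2 : ℝ → ℝ := fun s => iteratedFDeriv ℝ 2 f (x + s • h) (fun _ => h) with hg2
  set φ : ℝ → ℝ := fun s => Real.exp (-(f (x + s • h))) with hφ
  set φ' : ℝ → ℝ := fun s => -(g1 s) * φ s with hφ'
  set ψ : ℝ → ℝ := fun s => ((g1 s)^2 - g2 s) * φ s with hψdef
  have hφpos : ∀ s, 0 < φ s := fun s => Real.exp_pos _
  have Hφ : ∀ s ∈ S, HasDerivAt φ (φ' s) s := by
    intro s hs
    have := ((aux_g1 hfc hs).neg).exp
    refine this.congr_deriv ?_
    simp only [φ', φ, g1, Pi.neg_apply]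
    ring
  have Hφ' : ∀ s ∈ S, HasDerivAt φ' (ψ s) s := by
    intro s hs
    have := ((aux_g2 hfc hs).neg).mul (Hφ s hs)
    refine this.congr_deriv ?_
    simp only [ψ, φ', g1, g2, Pi.neg_apply]
    ring
  have hψ : ∀ s ∈ S, ψ s ≤ 0 := by
    intro s hs
    have hG := hGpos _ hs h hh
    have : (g1 s)^2 - g2 s = -(affMetric f (x + s • h) h) := by
      simp only [affMetric, hg1, hg2]; ring
    rw [hψdef]
    simp only [this]
    exact mul_nonpos_of_nonpos_of_nonneg (by linarith) (hφpos s).le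
  by_cases hb : BddAbove {s : ℝ | x + s • h ∈ X}
  · -- bounded case
    obtain ⟨htT, hσ⟩ := sigma_eq_of_bdd hXc hXconv hb ht
    set T := sSup {s : ℝ | x + s • h ∈ X} with hT
    have hTmem : x + T • h ∈ X :=
      (tset_closed hXc).csSup_mem ⟨t, (interior_subset (s := X) ht : x + t • h ∈ X)⟩ hb
    have hIoo : ∀ s ∈ Ioo t T, s ∈ S := fun s hs =>
      mem_sset_of_between hXconv ht hTmem hs.1.le hs.2
    have hNB : (nhdsWithin T (Ioo t T)).NeBot := right_nhdsWithin_Ioo_neBot htT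
    have hcont : Continuous (fun s : ℝ => x + s • h) := by continuity
    have hmap : Tendsto (fun s : ℝ => x + s • h) (nhdsWithin T (Ioo t T))
        (nhdsWithin (x + T • h) (interior X)) := by
      apply tendsto_nhdsWithin_of_tendsto_nhds_of_eventually_within
      · exact (hcont.tendsto T).mono_left nhdsWithin_le_nhds
      · exact eventually_mem_nhdsWithin.mono fun s hs => hIoo s hs
    have hfr : x + T • h ∈ frontier X :=
      frontier_of_bdd hXc hb ⟨t, (interior_subset (s := X) ht : x + t • h ∈ X)⟩
    have hft : Tendsto (fun s : ℝ => f (x + s • h)) (nhdsWithin T (Ioo t T)) atTop :=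
      (hbarrier _ hfr).comp hmap
    have hφ0 : Tendsto φ (nhdsWithin T (Ioo t T)) (nhds 0) :=
      Real.tendsto_exp_atBot.comp (tendsto_neg_atTop_atBot.comp hft)
    have hrhs : Tendsto (fun s : ℝ => φ t + φ' t * (s - t)) (nhdsWithin T (Ioo t T))
        (nhds (φ t + φ' t * (T - t))) :=
      ((continuous_const.add ((continuous_const).mul
        (continuous_id.sub continuous_const))).tendsto T).mono_left nhdsWithin_le_nhds
    have key : (0:ℝ) ≤ φ t + φ' t * (T - t) := by
      refine le_of_tendsto_of_tendsto hφ0 hrhs ?_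
      exact eventually_mem_nhdsWithin.mono fun s hs =>
        tangent_le hSo hSc Hφ Hφ' hψ ht (hIoo s hs) hs.1.le
    rw [hσ]
    rw [le_div_iff₀ (by linarith : (0:ℝ) < T - t)]
    have hp := hφpos t
    simp only [hφ'] at key
    nlinarith [key]
  · -- unbounded case
    rw [sigma_eq_zero_of_unbdd hXconv hb (interior_subset ht)]
    by_contra hg
    push_neg at hg
    have hd : 0 < g1 t * φ t := mul_pos hg (hφpos t)
    set s : ℝ := t + (φ t + 1) / (g1 t * φ t) with hs
    have hst : t < s := by
      have h2 : 0 < (φ t + 1) / (g1 t * φ t) := div_pos (by nlinarith [hφpos t]) hd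
      rw [hs]; linarith
    have hsS : s ∈ S := by
      obtain ⟨u, hu, hsu⟩ : ∃ u, (x + u • h ∈ X) ∧ s < u := by
        by_contra hcon
        push_neg at hcon
        exact hb ⟨s, fun z hz => hcon z hz⟩
      exact mem_sset_of_between hXconv ht hu hst.le hsu
    have htan := tangent_le hSo hSc Hφ Hφ' hψ ht hsS hst.le
    have hcalc : φ' t * (s - t) = -(φ t + 1) := by
      simp only [hφ', hs]
      have h1 : g1 t ≠ 0 := ne_of_gt hg
      have h2 : φ t ≠ 0 := (hφpos t).ne'
      field_simp
      ring
    rw [hcalc] at htan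
    have := hφpos s
    linarith

lemma sigma_hasDerivAt (hXc : IsClosed X) (hXconv : Convex ℝ X)
    {t : ℝ} (ht : x + t • h ∈ interior X) :
    HasDerivAt (fun s : ℝ => sigmaDist X (x + s • h) h)
      ((sigmaDist X (x + t • h) h)^2) t := by
  have hmem : ∀ᶠ s in nhds t, x + s • h ∈ interior X :=
    (sset_open (X := X) (x := x) (h := h)).mem_nhds ht
  by_cases hb : BddAbove {s : ℝ | x + s • h ∈ X}
  · set T := sSup {s : ℝ | x + s • h ∈ X} with hT
    obtain ⟨htT, hσ⟩ := sigma_eq_of_bdd hXc hXconv hb ht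
    have heq : (fun s : ℝ => sigmaDist X (x + s • h) h) =ᶠ[nhds t]
        (fun s : ℝ => 1 / (T - s)) := by
      filter_upwards [hmem] with s hs
      exact (sigma_eq_of_bdd hXc hXconv hb hs).2
    have hbase : HasDerivAt (fun s : ℝ => 1 / (T - s)) (1/(T - t)^2) t := by
      have h1 : HasDerivAt (fun s : ℝ => T - s) (-1) t := by
        simpa using (hasDerivAt_id t).const_sub T
      have h2 := h1.inv (sub_ne_zero.mpr (ne_of_gt htT))
      simp only [one_div]
      refine h2.congr_deriv ?_
      ring
    rw [hσ, div_pow, one_pow]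
    exact hbase.congr_of_eventuallyEq heq
  · have heq : (fun s : ℝ => sigmaDist X (x + s • h) h) =ᶠ[nhds t]
        (fun _ : ℝ => (0:ℝ)) := by
      filter_upwards [hmem] with s hs
      exact sigma_eq_zero_of_unbdd hXconv hb (interior_subset hs)
    rw [sigma_eq_zero_of_unbdd hXconv hb (interior_subset ht)]
    norm_num
    exact (hasDerivAt_const t (0:ℝ)).congr_of_eventuallyEq heq

lemma u_pos (hXc : IsClosed X) (hXconv : Convex ℝ X)
    (hfc : ContDiffOn ℝ 3 f (interior X))
    (hGpos : ∀ y ∈ interior X, ∀ h : E, h ≠ 0 → 0 < affMetric f y h)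
    (hbarrier : ∀ y ∈ frontier X, Tendsto f (nhdsWithin y (interior X)) atTop)
    (hh : h ≠ 0) {t : ℝ} (ht : x + t • h ∈ interior X) :
    0 < sigmaDist X (x + t • h) h - fderiv ℝ f (x + t • h) h := by
  rcases lt_or_eq_of_le (sub_nonneg.2
    (omega_nonneg hXc hXconv hfc hGpos hbarrier hh ht)) with hlt | heq
  · exact hlt
  exfalso
  set u : ℝ → ℝ := fun s => sigmaDist X (x + s • h) h - fderiv ℝ f (x + s • h) h with hu
  have hu0 : u t = 0 := heq.symm
  have hσg : sigmaDist X (x + t • h) h = fderiv ℝ f (x + t • h) h := by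
    exact sub_eq_zero.1 heq.symm
  have hud : HasDerivAt u ((sigmaDist X (x + t • h) h)^2
      - iteratedFDeriv ℝ 2 f (x + t • h) (fun _ => h)) t :=
    (sigma_hasDerivAt hXc hXconv ht).sub (aux_g2 hfc ht)
  have hdneg : (sigmaDist X (x + t • h) h)^2
      - iteratedFDeriv ℝ 2 f (x + t • h) (fun _ => h) < 0 := by
    have hG := hGpos _ ht h hh
    simp only [affMetric] at hG
    rw [hσg]
    linarith
  -- slope tends to a negative number; pick a point to the right within S
  have hslope := hasDerivAt_iff_tendsto_slope.1 hud
  have hev : ∀ᶠ z in nhdsWithin t {t}ᶜ, slope u t z < 0 :=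
    hslope.eventually_lt_const hdneg
  have hev2 : ∀ᶠ z in nhdsWithin t (Set.Ioi t), slope u t z < 0 :=
    hev.filter_mono (nhdsWithin_mono t (fun z hz => ne_of_gt hz))
  have hmem1 : ∀ᶠ z in nhds t, x + z • h ∈ interior X :=
    (sset_open (X := X) (x := x) (h := h)).eventually_mem ht
  have hmem2 : ∀ᶠ z in nhdsWithin t (Set.Ioi t), x + z • h ∈ interior X :=
    hmem1.filter_mono nhdsWithin_le_nhds
  obtain ⟨z, hz1, hz2, hz3⟩ := (hev2.and (hmem2.and eventually_mem_nhdsWithin)).exists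
  have hzt : t < z := hz3
  have huz : u z < 0 := by
    have := hz1
    rw [slope_def_field] at this
    have h2 : (u z - u t) / (z - t) < 0 := by
      simpa [div_eq_iff, hu0] using this
    rcases div_neg_iff.1 h2 with ⟨h3, h4⟩ | ⟨h3, h4⟩
    · linarith
    · linarith [hu0]
  have := omega_nonneg (x := x) hXc hXconv hfc hGpos hbarrier hh hz2
  simp only [hu] at huz
  linarith


theorem main_aux (hXc : IsClosed X) (hXconv : Convex ℝ X)
    (hfc : ContDiffOn ℝ 3 f (interior X))
    (hGpos : ∀ y ∈ interior X, ∀ h : E, h ≠ 0 → 0 < affMetric f y h)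
    (hbarrier : ∀ y ∈ frontier X, Tendsto f (nhdsWithin y (interior X)) atTop)
    (hcurv : ∀ y ∈ interior X, ∀ h : E, h ≠ 0 →
      cubicForm f y h ≤ 2 * ((omegaQ X f y h)^2 - 1) / omegaQ X f y h *
        (affMetric f y h) ^ ((3:ℝ)/2))
    (hh : h ≠ 0) :
    MonotoneOn (fun t : ℝ => omegaQ X f (x + t • h) h)
      {t : ℝ | x + t • h ∈ interior X} := by
  classical
  set S : Set ℝ := {s : ℝ | x + s • h ∈ interior X} with hSdef
  have hSo : IsOpen S := sset_open
  have hSc : Convex ℝ S := sset_convex hXconv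
  set a : ℝ → ℝ := fun s => fderiv ℝ f (x + s • h) h with ha
  set b : ℝ → ℝ := fun s => iteratedFDeriv ℝ 2 f (x + s • h) (fun _ => h) with hbdef
  set c : ℝ → ℝ := fun s => iteratedFDeriv ℝ 3 f (x + s • h) (fun _ => h) with hcdef
  set σ : ℝ → ℝ := fun s => sigmaDist X (x + s • h) h with hσdef
  set q : ℝ → ℝ := fun s => Real.sqrt (b s - (a s)^2) with hqdef
  set D : ℝ → ℝ := fun s =>
    (((σ s)^2 - b s) * q s - (σ s - a s) * ((c s - 2 * a s * b s)/(2 * q s))) / (q s)^2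
    with hDdef
  have hG : ∀ s ∈ S, 0 < b s - (a s)^2 := by
    intro s hs
    have := hGpos _ hs h hh
    simpa [affMetric, hbdef, ha] using this
  have hq : ∀ s ∈ S, 0 < q s := fun s hs => Real.sqrt_pos.2 (hG s hs)
  have hq2 : ∀ s ∈ S, (q s)^2 = b s - (a s)^2 := fun s hs => Real.sq_sqrt (hG s hs).le
  have HW : ∀ s ∈ S, HasDerivAt (fun r : ℝ => omegaQ X f (x + r • h) h) (D s) s := by
    intro s hs
    have hnum : HasDerivAt (fun r : ℝ => σ r - a r) ((σ s)^2 - b s) s :=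
      (sigma_hasDerivAt hXc hXconv hs).sub (aux_g2 hfc hs)
    have hGd : HasDerivAt (fun r : ℝ => b r - (a r)^2) (c s - 2 * a s * b s) s := by
      have h3 := aux_g3 hfc hs
      have hpow := (aux_g2 hfc hs).pow 2
      have := h3.sub hpow
      refine this.congr_deriv ?_
      push_cast
      ring
    have hden : HasDerivAt (fun r : ℝ => q r)
        ((c s - 2 * a s * b s) / (2 * q s)) s :=
      hGd.sqrt (ne_of_gt (hG s hs))
    have := hnum.div hden (ne_of_gt (hq s hs))
    simpa only [omegaQ, affMetric, hDdef, Pi.div_def] using this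
  have hDnonneg : ∀ s ∈ S, 0 ≤ D s := by
    intro s hs
    have hGs := hG s hs
    have hqs := hq s hs
    have hq2s := hq2 s hs
    have hus : 0 < σ s - a s :=
      u_pos hXc hXconv hfc hGpos hbarrier hh hs
    -- curvature hypothesis at the point
    have hC := hcurv _ hs h hh
    simp only [cubicForm, omegaQ, affMetric, ha, hbdef, hcdef, hσdef] at hC
    -- rewrite the rpow
    have hrw : (b s - (a s)^2) ^ ((3:ℝ)/2) = (b s - (a s)^2) * q s := by
      rw [show (3:ℝ)/2 = 1 + 1/2 by norm_num, Real.rpow_add hGs, Real.rpow_one,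
        ← Real.sqrt_eq_rpow]
    rw [hrw] at hC
    have hC' : (σ s - a s) * (c s - 6 * b s * a s + 4 * (a s)^3) ≤
        2 * ((σ s - a s)^2 - (b s - (a s)^2)) * (b s - (a s)^2) := by
      have h1 := mul_le_mul_of_nonneg_left hC hus.le
      calc (σ s - a s) * (c s - 6 * b s * a s + 4 * (a s)^3) ≤
          (σ s - a s) * (2 * (((σ s - a s) / q s)^2 - 1) / ((σ s - a s) / q s) *
            ((b s - (a s)^2) * q s)) := h1
        _ = 2 * ((σ s - a s)^2 - (b s - (a s)^2)) * (b s - (a s)^2) := by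
          rw [← hq2s]
          field_simp
    have key : 0 ≤ 2 * ((σ s)^2 - b s) * (b s - (a s)^2) -
        (σ s - a s) * (c s - 2 * a s * b s) := by
      nlinarith [hC']
    have hnumeq : ((σ s)^2 - b s) * q s - (σ s - a s) * ((c s - 2*a s*b s)/(2*q s)) =
        (2 * ((σ s)^2 - b s) * (b s - (a s)^2) - (σ s - a s) * (c s - 2*a s*b s)) /
          (2 * q s) := by
      rw [← hq2s]
      field_simp
    rw [hDdef]
    apply div_nonneg _ (sq_nonneg _)
    rw [hnumeq]
    exact div_nonneg key (by linarith)
  apply monotoneOn_of_deriv_nonneg hSc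
  · exact fun s hs => (HW s hs).continuousAt.continuousWithinAt
  · intro s hs
    rw [hSo.interior_eq] at hs
    exact (HW s hs).differentiableAt.differentiableWithinAt
  · intro s hs
    rw [hSo.interior_eq] at hs
    rw [(HW s hs).deriv]
    exact hDnonneg s hs

end main

end AuxSC

theorem stmt_12 {n : ℕ} (X : Set (EuclideanSpace ℝ (Fin n)))
    (hX : IsRegularConvex X) (ν : ℝ) (hν : 2 ≤ ν)
    (f : EuclideanSpace ℝ (Fin n) → ℝ)
    (hf : IsPSCBarrier X f ((ν - 2)/Real.sqrt (ν - 1)))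
    (hcurv : ∀ x ∈ interior X, ∀ h : EuclideanSpace ℝ (Fin n), h ≠ 0 →
      cubicForm f x h ≤ 2 * ((omegaQ X f x h)^2 - 1) / omegaQ X f x h * (affMetric f x h) ^ ((3:ℝ)/2))
    (x h : EuclideanSpace ℝ (Fin n)) (hh : h ≠ 0) :
    MonotoneOn (fun t : ℝ => omegaQ X f (x + t • h) h)
      {t : ℝ | x + t • h ∈ interior X} := by
  obtain ⟨hXc, hXconv, -, -⟩ := hX
  obtain ⟨hfc, hGpos, hbarrier, -⟩ := hf
  exact main_aux hXc hXconv hfc hGpos hbarrier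
    (fun y hy d hd => hcurv y hy d hd) hh
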